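/- arXiv:2110.05807 — 9 statements merged into one kernel-verified Lean document; each statement's English description precedes it below -/
import Mathlib

section
/- Let K ≥ 1, let α : {1,…,K} → [0,1] be strictly decreasing, and let R be a ranked list over [K]. Let χ* : {1,…,K} → [0,1] and χ_R : {1,…,K} → [0,1] be examination probabilities of the optimal list R* = (1,…,K) and of R, respectively, and let χ_max ∈ [0,1] satisfy: χ_R(k) ≥ χ*(k) for every position k (any position is examined the least in the optimal list), and χ*(k) ≤ χ_max for every k. Then Σ_{k=1}^{K} (χ*(k)·α(k) − χ_R(k)·α(R(k))) ≤ K · χ_max · Δ(R), where Δ(R) is the attraction gap of R. -/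
/-- The attraction gap of a ranked list `R` over `[K]` with attraction
probabilities `α`: `Δ(R) = Σ_{k=1}^{K-1} max(0, α(R(k+1)) − α(R(k)))`. -/
noncomputable def attractionGap (K : ℕ) (α : ℕ → ℝ) (R : ℕ → ℕ) : ℝ :=
  ∑ k ∈ Finset.Icc 1 (K - 1), max 0 (α (R (k + 1)) - α (R k))

/-- Lemma 3, list regret bound. For a strictly decreasing
attraction function `α : [K] → [0,1]`, a ranked list `R` (a bijection of
`{1,…,K}`), examination probabilities `χ*` of the optimal list and `χ_R` of
`R` with `χ_R(k) ≥ χ*(k)` and `χ*(k) ≤ χ_max`, the expected regret of `R` is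
at most `K · χ_max · Δ(R)`. -/
theorem bubblerank_list_regret
    (K : ℕ) (hK : 1 ≤ K)
    (α : ℕ → ℝ)
    (hα01 : ∀ i ∈ Set.Icc 1 K, α i ∈ Set.Icc (0 : ℝ) 1)
    (hαanti : StrictAntiOn α (Set.Icc 1 K))
    (R : ℕ → ℕ) (hR : Set.BijOn R (Set.Icc 1 K) (Set.Icc 1 K))
    (χstar χR : ℕ → ℝ) (χmax : ℝ)
    (hχstar01 : ∀ k ∈ Set.Icc 1 K, χstar k ∈ Set.Icc (0 : ℝ) 1)
    (hχR01 : ∀ k ∈ Set.Icc 1 K, χR k ∈ Set.Icc (0 : ℝ) 1)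
    (hχmax01 : χmax ∈ Set.Icc (0 : ℝ) 1)
    (hA5 : ∀ k ∈ Set.Icc 1 K, χstar k ≤ χR k)
    (hmax : ∀ k ∈ Set.Icc 1 K, χstar k ≤ χmax) :
    ∑ k ∈ Finset.Icc 1 K, (χstar k * α k - χR k * α (R k)) ≤
      (K : ℝ) * χmax * attractionGap K α R := by
  have hΔ0 : 0 ≤ attractionGap K α R :=
    Finset.sum_nonneg (fun _ _ => le_max_left _ _)
  have hχmax0 : 0 ≤ χmax := hχmax01.1
  -- key pointwise bound
  have key : ∀ k ∈ Finset.Icc 1 K, max 0 (α k - α (R k)) ≤ attractionGap K α R := by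
    intro k hk
    rw [Finset.mem_Icc] at hk
    -- pigeonhole: some position j ∈ [k, K] has R j ≤ k
    have hex : ∃ j ∈ Finset.Icc k K, R j ≤ k := by
      by_contra h
      push_neg at h
      have hsub : (Finset.Icc k K).image R ⊆ Finset.Icc (k + 1) K := by
        intro x hx
        rw [Finset.mem_image] at hx
        obtain ⟨j, hj, rfl⟩ := hx
        rw [Finset.mem_Icc] at hj ⊢
        exact ⟨h j (Finset.mem_Icc.mpr hj),
          (hR.mapsTo ⟨le_trans hk.1 hj.1, hj.2⟩).2⟩
      have hcard : ((Finset.Icc k K).image R).card = K - k + 1 := by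
        rw [Finset.card_image_of_injOn, Nat.card_Icc]
        · omega
        · intro a ha b hb hab
          rw [Finset.coe_Icc] at ha hb
          exact hR.injOn ⟨le_trans hk.1 ha.1, ha.2⟩ ⟨le_trans hk.1 hb.1, hb.2⟩ hab
      have hle := Finset.card_le_card hsub
      rw [hcard, Nat.card_Icc] at hle
      omega
    obtain ⟨j, hjmem, hRj⟩ := hex
    rw [Finset.mem_Icc] at hjmem
    have hRjmem := hR.mapsTo (Set.mem_Icc.mpr ⟨le_trans hk.1 hjmem.1, hjmem.2⟩)
    have hαkRj : α k ≤ α (R j) :=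
      hαanti.antitoneOn ⟨hRjmem.1, le_trans hRj hk.2⟩ ⟨hk.1, hk.2⟩ hRj
    -- telescoping
    have htel : α (R j) - α (R k) = ∑ m ∈ Finset.Ico k j, (α (R (m + 1)) - α (R m)) := by
      rw [Finset.sum_Ico_eq_sub _ hjmem.1, Finset.sum_range_sub (fun m => α (R m)),
        Finset.sum_range_sub (fun m => α (R m))]
      ring
    have hsum : ∑ m ∈ Finset.Ico k j, (α (R (m + 1)) - α (R m)) ≤ attractionGap K α R := by
      calc ∑ m ∈ Finset.Ico k j, (α (R (m + 1)) - α (R m))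
          ≤ ∑ m ∈ Finset.Ico k j, max 0 (α (R (m + 1)) - α (R m)) :=
            Finset.sum_le_sum (fun m _ => le_max_right _ _)
        _ ≤ attractionGap K α R := by
            apply Finset.sum_le_sum_of_subset_of_nonneg
            · intro m hm
              rw [Finset.mem_Ico] at hm
              rw [Finset.mem_Icc]
              omega
            · intro _ _ _
              exact le_max_left _ _
    apply max_le hΔ0
    calc α k - α (R k) ≤ α (R j) - α (R k) := by linarith
      _ ≤ attractionGap K α R := htel ▸ hsum
  calc ∑ k ∈ Finset.Icc 1 K, (χstar k * α k - χR k * α (R k))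
      ≤ ∑ k ∈ Finset.Icc 1 K, χmax * attractionGap K α R := by
        apply Finset.sum_le_sum
        intro k hk
        have hk' := hk
        rw [Finset.mem_Icc] at hk'
        have hks : k ∈ Set.Icc 1 K := Set.mem_Icc.mpr hk'
        have hRk := hR.mapsTo hks
        have hαRk0 : 0 ≤ α (R k) := (hα01 _ hRk).1
        have hχs := hχstar01 k hks
        calc χstar k * α k - χR k * α (R k)
            ≤ χstar k * α k - χstar k * α (R k) := by
              have := hA5 k hks
              nlinarith
          _ = χstar k * (α k - α (R k)) := by ring
          _ ≤ χstar k * max 0 (α k - α (R k)) :=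
              mul_le_mul_of_nonneg_left (le_max_right _ _) hχs.1
          _ ≤ χmax * max 0 (α k - α (R k)) :=
              mul_le_mul_of_nonneg_right (hmax k hks) (le_max_left _ _)
          _ ≤ χmax * attractionGap K α R :=
              mul_le_mul_of_nonneg_left (key k hk) hχmax0
    _ = (K : ℝ) * χmax * attractionGap K α R := by
        rw [Finset.sum_const, Nat.card_Icc, nsmul_eq_mul]
        have : K + 1 - 1 = K := by omega
        rw [this]
        ring
end

section
/- Let K ≥ 1, let α : {1,…,K} → ℝ be nonincreasing, and let R be a ranked list over [K]. Then for every position k ∈ {1,…,K}, α(k) − α(R(k)) ≤ Δ(R), where Δ(R) is the attraction gap of R. -/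
/-- For nonincreasing `α : [K] → ℝ` and a ranked list `R`
over `[K]` (a bijection of `{1,…,K}`), every position `k` satisfies
`α(k) − α(R(k)) ≤ Δ(R)`. -/
theorem bubblerank_position_gap
    (K : ℕ) (hK : 1 ≤ K)
    (α : ℕ → ℝ) (hαanti : AntitoneOn α (Set.Icc 1 K))
    (R : ℕ → ℕ) (hR : Set.BijOn R (Set.Icc 1 K) (Set.Icc 1 K)) :
    ∀ k ∈ Set.Icc 1 K, α k - α (R k) ≤ attractionGap K α R := by
  intro k hk
  obtain ⟨hk1, hkK⟩ := hk
  -- pigeonhole: some position j ≥ k carries an item ≤ k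
  obtain ⟨j, hkj, hjK, hRj⟩ : ∃ j, k ≤ j ∧ j ≤ K ∧ R j ≤ k := by
    by_contra h
    push_neg at h
    set P := (Finset.Icc 1 K).filter (fun p => R p ≤ k) with hP
    have hsurj : Set.SurjOn R P (Finset.Icc 1 k) := by
      intro i hi
      simp only [Finset.coe_Icc, Set.mem_Icc] at hi
      obtain ⟨p, hp, hpi⟩ := hR.surjOn (⟨hi.1, le_trans hi.2 hkK⟩ : i ∈ Set.Icc 1 K)
      refine ⟨p, ?_, hpi⟩
      simp only [hP, Finset.coe_filter, Set.mem_setOf_eq, Finset.mem_Icc]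
      exact ⟨⟨(Set.mem_Icc.mp hp).1, (Set.mem_Icc.mp hp).2⟩, hpi ▸ hi.2⟩
    have hcard : (Finset.Icc 1 k).card ≤ P.card :=
      Finset.card_le_card_of_surjOn R hsurj
    have hPsub : P ⊆ Finset.Ico 1 k := by
      intro p hp
      simp only [hP, Finset.mem_filter, Finset.mem_Icc] at hp
      refine Finset.mem_Ico.mpr ⟨hp.1.1, ?_⟩
      by_contra hpk
      push_neg at hpk
      exact absurd hp.2 (not_le.mpr (h p hpk hp.1.2))
    have hle := Finset.card_le_card hPsub
    simp [Nat.card_Icc, Nat.card_Ico] at hcard hle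
    omega
  have hjmem : j ∈ Set.Icc 1 K := ⟨le_trans hk1 hkj, hjK⟩
  have hRjmem : R j ∈ Set.Icc 1 K := hR.mapsTo hjmem
  have hα1 : α k ≤ α (R j) := hαanti hRjmem ⟨hk1, hkK⟩ hRj
  have htel : α (R j) - α (R k) =
      ∑ i ∈ Finset.range (j - k), (α (R (k + i + 1)) - α (R (k + i))) := by
    have := Finset.sum_range_sub (fun i => α (R (k + i))) (j - k)
    rw [Nat.add_sub_cancel' hkj, Nat.add_zero] at this
    rw [← this]
    exact Finset.sum_congr rfl fun i _ => by rw [Nat.add_assoc]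
  calc α k - α (R k) ≤ α (R j) - α (R k) := by linarith
    _ = ∑ i ∈ Finset.range (j - k), (α (R (k + i + 1)) - α (R (k + i))) := htel
    _ ≤ ∑ i ∈ Finset.range (j - k), max 0 (α (R (k + i + 1)) - α (R (k + i))) :=
        Finset.sum_le_sum (fun i _ => le_max_right _ _)
    _ = ∑ m ∈ Finset.Ico k j, max 0 (α (R (m + 1)) - α (R m)) := by
        rw [Finset.sum_Ico_eq_sum_range]
    _ ≤ attractionGap K α R := by
        apply Finset.sum_le_sum_of_subset_of_nonneg
        · intro m hm
          simp only [Finset.mem_Ico] at hm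
          refine Finset.mem_Icc.mpr ⟨le_trans hk1 hm.1, ?_⟩
          omega
        · intros
          exact le_max_left _ _
end

section
/- Let K ≥ 1, let α : {1,…,K} → ℝ be strictly decreasing, and let R̄ be a ranked list over [K]. Let P be a set of item pairs (i,j) with i < j such that: (i) for every position k ∈ {1,…,K−1}, if the adjacent items u = R̄(k) and v = R̄(k+1) satisfy v < u (i.e., the pair is incorrectly ordered in R̄), then (v,u) ∈ P. Let R' be obtained from R̄ by a set of pairwise disjoint adjacent transpositions such that (ii) for every transposed position pair (k,k+1), the unordered pair of items {R̄(k), R̄(k+1)}, written as (min, max), belongs to P. Then Δ(R') ≤ 3 · Σ_{(i,j) ∈ P} (α(i) − α(j)), where Δ(R') is the attraction gap of R'. -/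
/-- `R'` is obtained from `R` by the set `S` of pairwise disjoint adjacent
transpositions: `S ⊆ {1,…,K−1}` contains no two consecutive integers,
`R'(k) = R(k+1)` and `R'(k+1) = R(k)` for every `k ∈ S`, and `R'(m) = R(m)`
for every position `m ∈ {1,…,K}` not involved in any of these swaps. -/
def AdjSwaps (K : ℕ) (R R' : ℕ → ℕ) (S : Finset ℕ) : Prop :=
  S ⊆ Finset.Icc 1 (K - 1) ∧
  (∀ k ∈ S, k + 1 ∉ S) ∧
  (∀ k ∈ S, R' k = R (k + 1) ∧ R' (k + 1) = R k) ∧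
  (∀ m ∈ Set.Icc 1 K, m ∉ S → m - 1 ∉ S → R' m = R m)

private lemma max0_add_le (x y : ℝ) : max 0 (x + y) ≤ max 0 x + max 0 y := by
  apply max_le
  · have h1 : (0:ℝ) ≤ max 0 x := le_max_left _ _
    have h2 : (0:ℝ) ≤ max 0 y := le_max_left _ _
    linarith
  · exact add_le_add (le_max_right 0 x) (le_max_right 0 y)

/-- Lemma 4, off-base gap. Let `α : [K] → ℝ` be strictly
decreasing and `R̄` a ranked list over `[K]`. Let `P` be a set of item pairs
`(i,j)` with `i < j` containing every incorrectly-ordered adjacent item pair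
of `R̄`, and let `R'` be obtained from `R̄` by pairwise disjoint adjacent
transpositions whose item pairs all belong to `P`. Then
`Δ(R') ≤ 3 Σ_{(i,j) ∈ P} (α(i) − α(j))`. -/
theorem bubblerank_off_base_gap
    (K : ℕ) (hK : 1 ≤ K)
    (α : ℕ → ℝ) (hαanti : StrictAntiOn α (Set.Icc 1 K))
    (Rbar : ℕ → ℕ) (hRbar : Set.BijOn Rbar (Set.Icc 1 K) (Set.Icc 1 K))
    (P : Finset (ℕ × ℕ))
    (hP : ∀ p ∈ P, 1 ≤ p.1 ∧ p.1 < p.2 ∧ p.2 ≤ K)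
    (hPadj : ∀ k ∈ Finset.Icc 1 (K - 1),
      Rbar (k + 1) < Rbar k → (Rbar (k + 1), Rbar k) ∈ P)
    (R' : ℕ → ℕ) (S : Finset ℕ)
    (hswap : AdjSwaps K Rbar R' S)
    (hSP : ∀ k ∈ S,
      (min (Rbar k) (Rbar (k + 1)), max (Rbar k) (Rbar (k + 1))) ∈ P) :
    attractionGap K α R' ≤ 3 * ∑ p ∈ P, (α p.1 - α p.2) := by
  obtain ⟨hS1, hS2, hS3, hS4⟩ := hswap
  set I : Finset ℕ := Finset.Icc 1 (K - 1) with hIdef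
  -- abbreviations
  set B : ℕ → ℝ := fun j => max 0 (α (Rbar (j + 1)) - α (Rbar j)) with hBdef
  set g : ℕ → ℝ := fun j => max 0 (α (Rbar j) - α (Rbar (j + 1))) with hgdef
  set φ : ℕ → ℕ × ℕ :=
    fun j => (min (Rbar j) (Rbar (j + 1)), max (Rbar j) (Rbar (j + 1))) with hφdef
  set val : ℕ × ℕ → ℝ := fun p => α p.1 - α p.2 with hvaldef
  have hB0 : ∀ j, 0 ≤ B j := fun j => le_max_left _ _
  have hg0 : ∀ j, 0 ≤ g j := fun j => le_max_left _ _
  have hmemI : ∀ k ∈ I, 1 ≤ k ∧ k + 1 ≤ K := by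
    intro k hk
    rw [hIdef, Finset.mem_Icc] at hk
    omega
  have hmemSetk : ∀ k ∈ I, k ∈ Set.Icc 1 K := by
    intro k hk; have := hmemI k hk; simp [Set.mem_Icc]; omega
  have hmemSetk1 : ∀ k ∈ I, k + 1 ∈ Set.Icc 1 K := by
    intro k hk; have := hmemI k hk; simp [Set.mem_Icc]; omega
  -- the two adjacent items of `Rbar` at a position in `I` are distinct
  have hdist : ∀ k ∈ I, Rbar k ≠ Rbar (k + 1) := by
    intro k hk h
    have := hRbar.injOn (hmemSetk k hk) (hmemSetk1 k hk) h
    omega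
  -- case analysis at each position
  have hcase : ∀ k ∈ I,
      (Rbar k < Rbar (k + 1) ∧ g k = val (φ k) ∧ B k = 0) ∨
      (Rbar (k + 1) < Rbar k ∧ B k = val (φ k) ∧ g k = 0) := by
    intro k hk
    have ha : Rbar k ∈ Set.Icc 1 K := hRbar.mapsTo (hmemSetk k hk)
    have hb : Rbar (k + 1) ∈ Set.Icc 1 K := hRbar.mapsTo (hmemSetk1 k hk)
    rcases lt_or_gt_of_ne (hdist k hk) with h | h
    · left
      refine ⟨h, ?_, ?_⟩
      · have hα : α (Rbar (k + 1)) < α (Rbar k) := hαanti ha hb h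
        simp only [hgdef, hφdef, hvaldef]
        rw [min_eq_left h.le, max_eq_right h.le]
        exact max_eq_right (by linarith)
      · have hα : α (Rbar (k + 1)) < α (Rbar k) := hαanti ha hb h
        simp only [hBdef]
        exact max_eq_left (by linarith)
    · right
      refine ⟨h, ?_, ?_⟩
      · have hα : α (Rbar k) < α (Rbar (k + 1)) := hαanti hb ha h
        simp only [hBdef, hφdef, hvaldef]
        rw [min_eq_right h.le, max_eq_left h.le]
        exact max_eq_right (by linarith)
      · have hα : α (Rbar k) < α (Rbar (k + 1)) := hαanti hb ha h
        simp only [hgdef]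
        exact max_eq_left (by linarith)
  -- step 1: pointwise bound on the terms of the attraction gap of R'
  have step1 : attractionGap K α R' ≤
      ∑ k ∈ I, (if k ∈ S then g k else
        ((if k - 1 ∈ S then B (k - 1) else 0) + B k +
         (if k + 1 ∈ S then B (k + 1) else 0))) := by
    rw [attractionGap]
    apply Finset.sum_le_sum
    intro k hk
    obtain ⟨hk1, hk2⟩ := hmemI k hk
    by_cases hkS : k ∈ S
    · rw [if_pos hkS, (hS3 k hkS).1, (hS3 k hkS).2]
    · rw [if_neg hkS]
      -- compute R' k
      have hRk : R' k = (if k - 1 ∈ S then Rbar (k - 1) else Rbar k) := by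
        by_cases hm : k - 1 ∈ S
        · rw [if_pos hm]
          have h := (hS3 (k - 1) hm).2
          have h1 : 1 ≤ k - 1 := by
            have := hS1 hm; rw [Finset.mem_Icc] at this; omega
          rwa [Nat.sub_add_cancel (by omega)] at h
        · rw [if_neg hm]
          exact hS4 k (hmemSetk k hk) hkS hm
      have hRk1 : R' (k + 1) = (if k + 1 ∈ S then Rbar (k + 2) else Rbar (k + 1)) := by
        by_cases hm : k + 1 ∈ S
        · rw [if_pos hm]
          exact (hS3 (k + 1) hm).1
        · rw [if_neg hm]
          have : (k + 1) - 1 ∉ S := by simpa using hkS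
          exact hS4 (k + 1) (hmemSetk1 k hk) hm this
      by_cases hm : k - 1 ∈ S <;> by_cases hp : k + 1 ∈ S <;>
        rw [hRk, hRk1] <;> simp only [hm, hp, if_true, if_false, if_pos, if_neg]
      · -- both swapped: k-1 ∈ S, k+1 ∈ S
        have h1 : 1 ≤ k - 1 := by
          have := hS1 hm; rw [Finset.mem_Icc] at this; omega
        have hBk1 : B (k - 1) = max 0 (α (Rbar k) - α (Rbar (k - 1))) := by
          simp only [hBdef]; rw [Nat.sub_add_cancel (by omega)]
        calc max 0 (α (Rbar (k + 2)) - α (Rbar (k - 1)))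
            = max 0 ((α (Rbar (k + 2)) - α (Rbar (k + 1))) +
                ((α (Rbar (k + 1)) - α (Rbar k)) + (α (Rbar k) - α (Rbar (k - 1))))) := by
              ring_nf
          _ ≤ max 0 (α (Rbar (k + 2)) - α (Rbar (k + 1))) +
              max 0 ((α (Rbar (k + 1)) - α (Rbar k)) + (α (Rbar k) - α (Rbar (k - 1)))) :=
              max0_add_le _ _
          _ ≤ max 0 (α (Rbar (k + 2)) - α (Rbar (k + 1))) +
              (max 0 (α (Rbar (k + 1)) - α (Rbar k)) +
               max 0 (α (Rbar k) - α (Rbar (k - 1)))) := by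
              have := max0_add_le (α (Rbar (k + 1)) - α (Rbar k)) (α (Rbar k) - α (Rbar (k - 1)))
              linarith
          _ = B (k - 1) + B k + B (k + 1) := by
              rw [hBk1]; simp only [hBdef]; ring_nf
      · -- only k-1 ∈ S
        have h1 : 1 ≤ k - 1 := by
          have := hS1 hm; rw [Finset.mem_Icc] at this; omega
        have hBk1 : B (k - 1) = max 0 (α (Rbar k) - α (Rbar (k - 1))) := by
          simp only [hBdef]; rw [Nat.sub_add_cancel (by omega)]
        calc max 0 (α (Rbar (k + 1)) - α (Rbar (k - 1)))
            = max 0 ((α (Rbar (k + 1)) - α (Rbar k)) + (α (Rbar k) - α (Rbar (k - 1)))) := by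
              ring_nf
          _ ≤ max 0 (α (Rbar (k + 1)) - α (Rbar k)) + max 0 (α (Rbar k) - α (Rbar (k - 1))) :=
              max0_add_le _ _
          _ = B (k - 1) + B k + 0 := by rw [hBk1]; simp only [hBdef]; ring
      · -- only k+1 ∈ S
        calc max 0 (α (Rbar (k + 2)) - α (Rbar k))
            = max 0 ((α (Rbar (k + 2)) - α (Rbar (k + 1))) + (α (Rbar (k + 1)) - α (Rbar k))) := by
              ring_nf
          _ ≤ max 0 (α (Rbar (k + 2)) - α (Rbar (k + 1))) + max 0 (α (Rbar (k + 1)) - α (Rbar k)) :=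
              max0_add_le _ _
          _ = 0 + B k + B (k + 1) := by simp only [hBdef]; ring
      · -- no neighbor swapped
        simp only [hBdef]
        linarith [le_refl (max 0 (α (Rbar (k + 1)) - α (Rbar k)))]
  -- step 2: split the bound into four sums
  have step2 : ∑ k ∈ I, (if k ∈ S then g k else
        ((if k - 1 ∈ S then B (k - 1) else 0) + B k +
         (if k + 1 ∈ S then B (k + 1) else 0))) ≤
      ∑ k ∈ I, (if k ∈ S then g k else 0) +
      ∑ k ∈ I, (if k - 1 ∈ S then B (k - 1) else 0) +
      ∑ k ∈ I, B k +
      ∑ k ∈ I, (if k + 1 ∈ S then B (k + 1) else 0) := by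
    rw [← Finset.sum_add_distrib, ← Finset.sum_add_distrib, ← Finset.sum_add_distrib]
    apply Finset.sum_le_sum
    intro k hk
    by_cases hkS : k ∈ S
    · rw [if_pos hkS, if_pos hkS]
      have h1 : (0:ℝ) ≤ if k - 1 ∈ S then B (k - 1) else 0 := by positivity
      have h2 : (0:ℝ) ≤ if k + 1 ∈ S then B (k + 1) else 0 := by positivity
      have h3 := hB0 k
      linarith
    · rw [if_neg hkS, if_neg hkS]
      linarith
  -- reindexing bound: the neighbor sums are at most `∑ j ∈ S, B j`
  have hSsum : ∀ j ∈ S, 0 ≤ B j := fun j _ => hB0 j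
  have step3a : ∑ k ∈ I, (if k - 1 ∈ S then B (k - 1) else 0) ≤ ∑ j ∈ S, B j := by
    rw [← Finset.sum_filter]
    have hinj : Set.InjOn (fun k => k - 1) (I.filter (fun k => k - 1 ∈ S)) := by
      intro x hx y hy h
      simp only [Finset.coe_filter, Set.mem_setOf_eq] at hx hy
      have hx1 : 1 ≤ x - 1 := by
        have := hS1 hx.2; rw [Finset.mem_Icc] at this; omega
      have hy1 : 1 ≤ y - 1 := by
        have := hS1 hy.2; rw [Finset.mem_Icc] at this; omega
      simp only at h
      omega
    rw [← Finset.sum_image hinj]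
    apply Finset.sum_le_sum_of_subset_of_nonneg
    · intro j hj
      simp only [Finset.mem_image, Finset.mem_filter] at hj
      obtain ⟨k, ⟨_, hkS⟩, rfl⟩ := hj
      exact hkS
    · intro j _ _; exact hB0 j
  have step3b : ∑ k ∈ I, (if k + 1 ∈ S then B (k + 1) else 0) ≤ ∑ j ∈ S, B j := by
    rw [← Finset.sum_filter]
    have hinj : Set.InjOn (fun k => k + 1) (I.filter (fun k => k + 1 ∈ S)) := by
      intro x _ y _ h
      simpa using h
    rw [← Finset.sum_image hinj]
    apply Finset.sum_le_sum_of_subset_of_nonneg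
    · intro j hj
      simp only [Finset.mem_image, Finset.mem_filter] at hj
      obtain ⟨k, ⟨_, hkS⟩, rfl⟩ := hj
      exact hkS
    · intro j _ _; exact hB0 j
  -- rewrite ∑ j ∈ S, B j as a sum over I
  have hSI : ∑ j ∈ S, B j = ∑ k ∈ I, (if k ∈ S then B k else 0) := by
    rw [← Finset.sum_filter]
    congr 1
    ext k
    simp only [Finset.mem_filter]
    exact ⟨fun h => ⟨hS1 h, h⟩, fun h => h.2⟩
  -- step 4: pointwise bound against pairs in P
  have step4 : ∑ k ∈ I, (if k ∈ S then g k else 0) +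
      (∑ k ∈ I, (if k ∈ S then B k else 0)) +
      ∑ k ∈ I, B k +
      (∑ k ∈ I, (if k ∈ S then B k else 0)) ≤
      ∑ k ∈ I, (3 * (if k ∈ S ∨ Rbar (k + 1) < Rbar k then val (φ k) else 0)) := by
    rw [← Finset.sum_add_distrib, ← Finset.sum_add_distrib, ← Finset.sum_add_distrib]
    apply Finset.sum_le_sum
    intro k hk
    rcases hcase k hk with ⟨hlt, hg, hB⟩ | ⟨hlt, hB, hg⟩
    · by_cases hkS : k ∈ S
      · have hcond : k ∈ S ∨ Rbar (k + 1) < Rbar k := Or.inl hkS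
        rw [if_pos hkS, if_pos hkS, if_pos hcond, hB, hg]
        have := hg0 k
        rw [hg] at this
        linarith
      · have hcond : ¬(k ∈ S ∨ Rbar (k + 1) < Rbar k) := by
          push_neg; exact ⟨hkS, by omega⟩
        rw [if_neg hkS, if_neg hkS, if_neg hcond, hB]
        norm_num
    · have hcond : k ∈ S ∨ Rbar (k + 1) < Rbar k := Or.inr hlt
      rw [if_pos hcond]
      have hv : 0 ≤ val (φ k) := by rw [← hB]; exact hB0 k
      by_cases hkS : k ∈ S
      · rw [if_pos hkS, if_pos hkS, hB, hg]; linarith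
      · rw [if_neg hkS, if_neg hkS, hB]; linarith
  -- step 5: the sum over I of the charged pairs is at most the sum over P
  have step5 : ∑ k ∈ I, (if k ∈ S ∨ Rbar (k + 1) < Rbar k then val (φ k) else 0) ≤
      ∑ p ∈ P, val p := by
    rw [← Finset.sum_filter]
    have hinj : Set.InjOn φ (I.filter (fun k => k ∈ S ∨ Rbar (k + 1) < Rbar k)) := by
      intro x hx y hy h
      simp only [Finset.coe_filter, Set.mem_setOf_eq] at hx hy
      have hxI := hx.1; have hyI := hy.1
      simp only [hφdef, Prod.mk.injEq] at h
      have h1 : (Rbar x = Rbar y ∧ Rbar (x + 1) = Rbar (y + 1)) ∨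
          (Rbar x = Rbar (y + 1) ∧ Rbar (x + 1) = Rbar y) := by omega
      rcases h1 with ⟨ha, hb⟩ | ⟨ha, hb⟩
      · exact hRbar.injOn (hmemSetk x hxI) (hmemSetk y hyI) ha
      · have e1 := hRbar.injOn (hmemSetk x hxI) (hmemSetk1 y hyI) ha
        have e2 := hRbar.injOn (hmemSetk1 x hxI) (hmemSetk y hyI) hb
        omega
    rw [← Finset.sum_image hinj]
    apply Finset.sum_le_sum_of_subset_of_nonneg
    · intro p hp
      simp only [Finset.mem_image, Finset.mem_filter] at hp
      obtain ⟨k, ⟨hkI, hcond⟩, rfl⟩ := hp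
      rcases hcond with hkS | hlt
      · exact hSP k hkS
      · have hmem := hPadj k hkI hlt
        simp only [hφdef]
        rwa [min_eq_right hlt.le, max_eq_left hlt.le]
    · intro p hpP _
      obtain ⟨hp1, hp2, hp3⟩ := hP p hpP
      have ha : p.1 ∈ Set.Icc 1 K := by simp [Set.mem_Icc]; omega
      have hb : p.2 ∈ Set.Icc 1 K := by simp [Set.mem_Icc]; omega
      have := hαanti ha hb hp2
      simp only [hvaldef]
      linarith
  -- put everything together
  have hfinal : ∑ k ∈ I, (3 * (if k ∈ S ∨ Rbar (k + 1) < Rbar k then val (φ k) else 0)) =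
      3 * ∑ k ∈ I, (if k ∈ S ∨ Rbar (k + 1) < Rbar k then val (φ k) else 0) := by
    rw [Finset.mul_sum]
  calc attractionGap K α R' ≤ _ := step1
    _ ≤ _ := step2
    _ ≤ ∑ k ∈ I, (if k ∈ S then g k else 0) +
      (∑ k ∈ I, (if k ∈ S then B k else 0)) +
      ∑ k ∈ I, B k +
      (∑ k ∈ I, (if k ∈ S then B k else 0)) := by
        rw [← hSI]; linarith [step3a, step3b]
    _ ≤ _ := step4
    _ = _ := hfinal
    _ ≤ 3 * ∑ p ∈ P, val p := by linarith [step5]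
    _ = 3 * ∑ p ∈ P, (α p.1 - α p.2) := rfl
end

section
/- Let K ≥ 1, let α : {1,…,K} → [0,1] be strictly decreasing, and let R̄ be a ranked list over [K]. Let P be a set of item pairs (i,j) with i < j such that every adjacent pair of items in R̄ that is incorrectly ordered (the item with larger index placed directly above the item with smaller index) belongs to P, and let R' be obtained from R̄ by a set of pairwise disjoint adjacent transpositions each of whose item pairs belongs to P. Let χ* : {1,…,K} → [0,1] and χ_{R'} : {1,…,K} → [0,1] be examination probabilities of the optimal list R* = (1,…,K) and of R', with χ_{R'}(k) ≥ χ*(k) for every k, and let χ_max ∈ [0,1] satisfy χ*(k) ≤ χ_max for every k. Then Σ_{k=1}^{K} (χ*(k)·α(k) − χ_{R'}(k)·α(R'(k))) ≤ 3 K χ_max · Σ_{(i,j) ∈ P} (α(i) − α(j)). -/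
lemma br_telescope (α : ℕ → ℝ) (a : ℕ) :
    ∀ b, a ≤ b → ∑ j ∈ Finset.Ico a b, (α j - α (j+1)) = α a - α b := by
  intro b hb
  induction b, hb using Nat.le_induction with
  | base => simp
  | succ b hb ih => rw [Finset.sum_Ico_succ_top hb, ih]; ring

lemma br_exists_inversion (K : ℕ) (Rbar : ℕ → ℕ)
    (hRbar : Set.BijOn Rbar (Set.Icc 1 K) (Set.Icc 1 K))
    (k j : ℕ) (hk : k ∈ Set.Icc 1 K) (hj1 : k ≤ j) (hj2 : j < Rbar k) :
    ∃ m, m ∈ Finset.Icc 1 (K-1) ∧ Rbar (m+1) ≤ j ∧ j < Rbar m := by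
  have htK : Rbar k ∈ Set.Icc 1 K := hRbar.mapsTo hk
  set T : Finset ℕ := (Finset.Icc 1 K).filter (fun m => Rbar m ≤ j) with hT
  have hjK : j < K := lt_of_lt_of_le hj2 htK.2
  -- Rbar maps T onto Icc 1 j, so card T ≥ j
  have hsurj : Set.SurjOn Rbar (T : Set ℕ) (Finset.Icc 1 j : Set ℕ) := by
    intro i hi
    simp only [Finset.coe_Icc, Set.mem_Icc] at hi
    obtain ⟨m, hm, hmi⟩ := hRbar.surjOn (⟨hi.1, hi.2.trans (le_of_lt hjK)⟩ : i ∈ Set.Icc 1 K)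
    refine ⟨m, ?_, hmi⟩
    simp only [hT, Finset.coe_filter, Set.mem_setOf_eq, Finset.mem_Icc]
    exact ⟨⟨hm.1, hm.2⟩, by rw [hmi]; exact hi.2⟩
  have hcard : j ≤ T.card := by
    have := Finset.card_le_card_of_surjOn Rbar hsurj
    simpa using this
  -- there is q ∈ T with j < q
  have hqex : ∃ q ∈ T, j < q := by
    by_contra h
    push_neg at h
    have hsub : T ⊆ (Finset.Icc 1 j).erase k := by
      intro m hm
      simp only [hT, Finset.mem_filter, Finset.mem_Icc] at hm
      refine Finset.mem_erase.2 ⟨?_, Finset.mem_Icc.2 ⟨hm.1.1, h m (by simpa [hT, Finset.mem_filter, Finset.mem_Icc] using hm)⟩⟩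
      rintro rfl
      exact absurd hm.2 (not_le.2 hj2)
    have := Finset.card_le_card hsub
    have hke : k ∈ Finset.Icc 1 j := Finset.mem_Icc.2 ⟨hk.1, hj1⟩
    rw [Finset.card_erase_of_mem hke, Nat.card_Icc] at this
    have hk1 : 1 ≤ k := hk.1
    omega
  obtain ⟨q, hqT, hjq⟩ := hqex
  simp only [hT, Finset.mem_filter, Finset.mem_Icc] at hqT
  -- D: positions in [k, q) with item > j; take its max
  set D : Finset ℕ := (Finset.Ico k q).filter (fun p => j < Rbar p) with hD
  have hkD : k ∈ D := by
    simp only [hD, Finset.mem_filter, Finset.mem_Ico]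
    exact ⟨⟨le_refl k, lt_of_le_of_lt hj1 hjq⟩, hj2⟩
  have hne : D.Nonempty := ⟨k, hkD⟩
  set m := D.max' hne with hm
  have hmD : m ∈ D := Finset.max'_mem D hne
  simp only [hD, Finset.mem_filter, Finset.mem_Ico] at hmD
  refine ⟨m, Finset.mem_Icc.2 ⟨le_trans hk.1 hmD.1.1, ?_⟩, ?_, hmD.2⟩
  · omega
  · -- Rbar (m+1) ≤ j
    by_contra h
    push_neg at h
    have hm1q : m + 1 < q ∨ m + 1 = q := by omega
    rcases hm1q with h1 | h1
    · have : m + 1 ∈ D := by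
        simp only [hD, Finset.mem_filter, Finset.mem_Ico]
        exact ⟨⟨le_trans hmD.1.1 (Nat.le_succ m), h1⟩, h⟩
      have := Finset.le_max' D _ this
      omega
    · rw [h1] at h; omega

lemma br_core (K : ℕ) (α : ℕ → ℝ) (hαanti : StrictAntiOn α (Set.Icc 1 K))
    (Rbar : ℕ → ℕ) (hRbar : Set.BijOn Rbar (Set.Icc 1 K) (Set.Icc 1 K))
    (k : ℕ) (hk : k ∈ Set.Icc 1 K) :
    α k - α (Rbar k) ≤
      ∑ m ∈ (Finset.Icc 1 (K-1)).filter (fun m => Rbar (m+1) < Rbar m),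
        (α (Rbar (m+1)) - α (Rbar m)) := by
  set Inv := (Finset.Icc 1 (K-1)).filter (fun m => Rbar (m+1) < Rbar m) with hInv
  have hK : 1 ≤ K := le_trans hk.1 hk.2
  have hmemInv : ∀ m ∈ Inv, m ∈ Set.Icc 1 K ∧ m + 1 ∈ Set.Icc 1 K ∧ Rbar (m+1) < Rbar m := by
    intro m hm
    simp only [hInv, Finset.mem_filter, Finset.mem_Icc] at hm
    exact ⟨⟨hm.1.1, by omega⟩, ⟨by omega, by omega⟩, hm.2⟩
  have hnn : ∀ m ∈ Inv, 0 ≤ α (Rbar (m+1)) - α (Rbar m) := by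
    intro m hm
    obtain ⟨h1, h2, h3⟩ := hmemInv m hm
    have := hαanti (hRbar.mapsTo h2) (hRbar.mapsTo h1) h3
    linarith
  rcases le_or_gt (Rbar k) k with hle | hlt
  · have h1 : α k ≤ α (Rbar k) :=
      hαanti.antitoneOn (hRbar.mapsTo hk) hk hle
    have h2 : 0 ≤ ∑ m ∈ Inv, (α (Rbar (m+1)) - α (Rbar m)) := Finset.sum_nonneg hnn
    linarith
  · -- choice function
    classical
    set φ : ℕ → ℕ := fun j =>
      if h : ∃ m, m ∈ Finset.Icc 1 (K-1) ∧ Rbar (m+1) ≤ j ∧ j < Rbar m then h.choose else 0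
      with hφ
    have hφprop : ∀ j, k ≤ j → j < Rbar k →
        φ j ∈ Finset.Icc 1 (K-1) ∧ Rbar (φ j + 1) ≤ j ∧ j < Rbar (φ j) := by
      intro j h1 h2
      have hex := br_exists_inversion K Rbar hRbar k j hk h1 h2
      rw [hφ]
      simp only [dif_pos hex]
      exact hex.choose_spec
    have hmaps : ∀ j ∈ Finset.Ico k (Rbar k), φ j ∈ Inv := by
      intro j hj
      rw [Finset.mem_Ico] at hj
      obtain ⟨h1, h2, h3⟩ := hφprop j hj.1 hj.2
      simp only [hInv, Finset.mem_filter]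
      exact ⟨h1, lt_of_le_of_lt h2 h3⟩
    have htel : α k - α (Rbar k) = ∑ j ∈ Finset.Ico k (Rbar k), (α j - α (j+1)) :=
      (br_telescope α k (Rbar k) (le_of_lt hlt)).symm
    rw [htel, ← Finset.sum_fiberwise_of_maps_to hmaps (fun j => α j - α (j+1))]
    apply Finset.sum_le_sum
    intro m hm
    obtain ⟨hm1, hm2, hm3⟩ := hmemInv m hm
    have hsub : (Finset.Ico k (Rbar k)).filter (fun j => φ j = m) ⊆
        Finset.Ico (Rbar (m+1)) (Rbar m) := by
      intro j hj
      simp only [Finset.mem_filter, Finset.mem_Ico] at hj ⊢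
      obtain ⟨⟨hj1, hj2⟩, hj3⟩ := hj
      obtain ⟨_, h2, h3⟩ := hφprop j hj1 hj2
      rw [hj3] at h2 h3
      exact ⟨h2, h3⟩
    have hnn2 : ∀ j ∈ Finset.Ico (Rbar (m+1)) (Rbar m), 0 ≤ α j - α (j+1) := by
      intro j hj
      rw [Finset.mem_Ico] at hj
      have h1 : Rbar (m+1) ∈ Set.Icc 1 K := hRbar.mapsTo hm2
      have h2 : Rbar m ∈ Set.Icc 1 K := hRbar.mapsTo hm1
      have hjI : j ∈ Set.Icc 1 K := ⟨le_trans h1.1 hj.1, le_trans (le_of_lt hj.2) h2.2⟩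
      have hRmK : Rbar m ≤ K := h2.2
      have hj1I : j + 1 ∈ Set.Icc 1 K := ⟨by omega, by omega⟩
      have := hαanti hjI hj1I (Nat.lt_succ_self j)
      linarith
    calc ∑ j ∈ (Finset.Ico k (Rbar k)).filter (fun j => φ j = m), (α j - α (j+1))
        ≤ ∑ j ∈ Finset.Ico (Rbar (m+1)) (Rbar m), (α j - α (j+1)) :=
          Finset.sum_le_sum_of_subset_of_nonneg hsub (fun j hj _ => hnn2 j hj)
      _ = α (Rbar (m+1)) - α (Rbar m) :=
          br_telescope α _ _ (le_of_lt hm3)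



/-- Lemma 5, off-base regret. Let `α : [K] → [0,1]` be
strictly decreasing, `R̄` a ranked list over `[K]`, `P` a set of item pairs
`(i,j)` with `i < j` containing every incorrectly-ordered adjacent item pair
of `R̄`, and `R'` obtained from `R̄` by pairwise disjoint adjacent
transpositions whose item pairs all belong to `P`. If `χ*` and `χ_{R'}` are
examination probabilities of the optimal list and of `R'` with
`χ_{R'}(k) ≥ χ*(k)` and `χ*(k) ≤ χ_max`, then
`Σ_k (χ*(k)·α(k) − χ_{R'}(k)·α(R'(k))) ≤ 3 K χ_max Σ_{(i,j)∈P} (α(i) − α(j))`. -/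
theorem bubblerank_off_base_regret
    (K : ℕ) (hK : 1 ≤ K)
    (α : ℕ → ℝ)
    (hα01 : ∀ i ∈ Set.Icc 1 K, α i ∈ Set.Icc (0 : ℝ) 1)
    (hαanti : StrictAntiOn α (Set.Icc 1 K))
    (Rbar : ℕ → ℕ) (hRbar : Set.BijOn Rbar (Set.Icc 1 K) (Set.Icc 1 K))
    (P : Finset (ℕ × ℕ))
    (hP : ∀ p ∈ P, 1 ≤ p.1 ∧ p.1 < p.2 ∧ p.2 ≤ K)
    (hPadj : ∀ k ∈ Finset.Icc 1 (K - 1),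
      Rbar (k + 1) < Rbar k → (Rbar (k + 1), Rbar k) ∈ P)
    (R' : ℕ → ℕ) (S : Finset ℕ)
    (hswap : AdjSwaps K Rbar R' S)
    (hSP : ∀ k ∈ S,
      (min (Rbar k) (Rbar (k + 1)), max (Rbar k) (Rbar (k + 1))) ∈ P)
    (χstar χR' : ℕ → ℝ) (χmax : ℝ)
    (hχstar01 : ∀ k ∈ Set.Icc 1 K, χstar k ∈ Set.Icc (0 : ℝ) 1)
    (hχR'01 : ∀ k ∈ Set.Icc 1 K, χR' k ∈ Set.Icc (0 : ℝ) 1)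
    (hχmax01 : χmax ∈ Set.Icc (0 : ℝ) 1)
    (hA5 : ∀ k ∈ Set.Icc 1 K, χstar k ≤ χR' k)
    (hmax : ∀ k ∈ Set.Icc 1 K, χstar k ≤ χmax) :
    ∑ k ∈ Finset.Icc 1 K, (χstar k * α k - χR' k * α (R' k)) ≤
      3 * (K : ℝ) * χmax * ∑ p ∈ P, (α p.1 - α p.2) := by
  classical
  obtain ⟨hS1, hS2, hS3, hS4⟩ := hswap
  set Inv := (Finset.Icc 1 (K-1)).filter (fun m => Rbar (m+1) < Rbar m) with hInvdef
  set sP := ∑ p ∈ P, (α p.1 - α p.2) with hsP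
  have hPnn : ∀ p ∈ P, 0 ≤ α p.1 - α p.2 := by
    intro p hp
    obtain ⟨h1, h2, h3⟩ := hP p hp
    have := hαanti ⟨h1, le_trans (le_of_lt h2) h3⟩ ⟨by omega, h3⟩ h2
    linarith
  have hsnn : 0 ≤ sP := Finset.sum_nonneg hPnn
  have hInvP : ∑ m ∈ Inv, (α (Rbar (m+1)) - α (Rbar m)) ≤ sP := by
    have hinj : ∀ x ∈ Inv, ∀ y ∈ Inv,
        (fun m => (Rbar (m+1), Rbar m)) x = (fun m => (Rbar (m+1), Rbar m)) y → x = y := by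
      intro x hx y hy hxy
      simp only [hInvdef, Finset.mem_filter, Finset.mem_Icc] at hx hy
      have hxI : x ∈ Set.Icc (1:ℕ) K := ⟨hx.1.1, by omega⟩
      have hyI : y ∈ Set.Icc (1:ℕ) K := ⟨hy.1.1, by omega⟩
      exact hRbar.injOn hxI hyI (congrArg Prod.snd hxy)
    have himg : Finset.image (fun m => (Rbar (m+1), Rbar m)) Inv ⊆ P := by
      intro p hp
      obtain ⟨m, hm, rfl⟩ := Finset.mem_image.1 hp
      simp only [hInvdef, Finset.mem_filter] at hm
      exact hPadj m hm.1 hm.2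
    calc ∑ m ∈ Inv, (α (Rbar (m+1)) - α (Rbar m))
        = ∑ p ∈ Finset.image (fun m => (Rbar (m+1), Rbar m)) Inv, (α p.1 - α p.2) :=
          (Finset.sum_image (f := fun p : ℕ × ℕ => α p.1 - α p.2) hinj).symm
      _ ≤ sP := Finset.sum_le_sum_of_subset_of_nonneg himg (fun p hp _ => hPnn p hp)
  have core : ∀ k ∈ Set.Icc 1 K, α k - α (Rbar k) ≤ sP := fun k hk =>
    le_trans (br_core K α hαanti Rbar hRbar k hk) hInvP
  have key : ∀ k ∈ Finset.Icc 1 K,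
      χstar k * α k - χR' k * α (R' k) ≤ χmax * (2 * sP) := by
    intro k hk
    rw [Finset.mem_Icc] at hk
    have hkS : k ∈ Set.Icc 1 K := ⟨hk.1, hk.2⟩
    have hmain : R' k ∈ Set.Icc 1 K ∧ α k - α (R' k) ≤ 2 * sP := by
      by_cases h1 : k ∈ S
      · have hR'k : R' k = Rbar (k+1) := (hS3 k h1).1
        have hkIc := hS1 h1
        rw [Finset.mem_Icc] at hkIc
        have hk1 : k + 1 ∈ Set.Icc 1 K := ⟨by omega, by omega⟩
        have hmemP := hSP k h1
        have hne : Rbar k ≠ Rbar (k+1) := fun h => by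
          have := hRbar.injOn hkS hk1 h; omega
        have hstep2 : α (Rbar k) - α (Rbar (k+1)) ≤ sP := by
          rcases lt_or_gt_of_ne hne with h | h
          · rw [min_eq_left (le_of_lt h), max_eq_right (le_of_lt h)] at hmemP
            have := Finset.single_le_sum hPnn hmemP
            rw [hsP]
            exact this
          · have := hαanti.antitoneOn (hRbar.mapsTo hk1) (hRbar.mapsTo hkS) (le_of_lt h)
            linarith
        have hstep1 := core k hkS
        exact ⟨hR'k ▸ hRbar.mapsTo hk1, by rw [hR'k]; linarith⟩
      · by_cases h2 : k - 1 ∈ S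
        · have hkm := hS1 h2
          rw [Finset.mem_Icc] at hkm
          have hR'k : R' k = Rbar (k-1) := by
            have := (hS3 (k-1) h2).2
            rwa [Nat.sub_add_cancel (by omega)] at this
          have hkmI : k - 1 ∈ Set.Icc (1:ℕ) K := ⟨hkm.1, by omega⟩
          have hstep1 := core (k-1) hkmI
          have hstep0 : α k ≤ α (k-1) := hαanti.antitoneOn hkmI hkS (by omega)
          exact ⟨hR'k ▸ hRbar.mapsTo hkmI, by rw [hR'k]; linarith⟩
        · have hR'k : R' k = Rbar k := hS4 k hkS h1 h2
          have hstep1 := core k hkS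
          exact ⟨hR'k ▸ hRbar.mapsTo hkS, by rw [hR'k]; linarith⟩
    obtain ⟨hR'mem, hbnd⟩ := hmain
    have hχ0 : 0 ≤ χstar k := (hχstar01 k hkS).1
    have hα0 : 0 ≤ α (R' k) := (hα01 _ hR'mem).1
    have h1 : χstar k * α (R' k) ≤ χR' k * α (R' k) :=
      mul_le_mul_of_nonneg_right (hA5 k hkS) hα0
    have h2 : χstar k * (α k - α (R' k)) ≤ χstar k * (2 * sP) :=
      mul_le_mul_of_nonneg_left hbnd hχ0
    have h3 : χstar k * (2 * sP) ≤ χmax * (2 * sP) :=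
      mul_le_mul_of_nonneg_right (hmax k hkS) (by linarith)
    have e : χstar k * (α k - α (R' k)) = χstar k * α k - χstar k * α (R' k) := by ring
    linarith
  have hcard : (Finset.Icc 1 K).card = K := by rw [Nat.card_Icc]; omega
  calc ∑ k ∈ Finset.Icc 1 K, (χstar k * α k - χR' k * α (R' k))
      ≤ ∑ _k ∈ Finset.Icc 1 K, χmax * (2 * sP) := Finset.sum_le_sum key
    _ = (K : ℝ) * (χmax * (2 * sP)) := by
        rw [Finset.sum_const, hcard, nsmul_eq_mul]
    _ ≤ 3 * (K : ℝ) * χmax * sP := by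
        have hχm : 0 ≤ χmax := hχmax01.1
        have hK0 : (0:ℝ) ≤ (K : ℝ) := Nat.cast_nonneg K
        nlinarith [mul_nonneg (mul_nonneg hK0 hχm) hsnn]
end

section
/- Let K ≥ 2 and let R_0, R_1, …, R_m be ranked lists over [K] such that for each t ∈ {1,…,m}, R_t is obtained from R_{t−1} by exchanging the items at some pair of adjacent positions (k, k+1) with R_{t−1}(k+1) < R_{t−1}(k) (i.e., each exchange corrects an incorrectly-ordered adjacent item pair). For a ranked list R, let AP(R) = { {R(k), R(k+1)} : k ∈ {1,…,K−1} } be its set of unordered adjacent item pairs. Then m ≤ |V(R_0)| and |AP(R_0) ∪ AP(R_1) ∪ ⋯ ∪ AP(R_m)| ≤ K − 1 + 2·|V(R_0)|, where V(R_0) is the set of incorrectly-ordered item pairs of R_0. -/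
open scoped Classical

/-- The set of incorrectly-ordered item pairs of a ranked list `R` over `[K]`:
`V(R) = {(i,j) : 1 ≤ i < j ≤ K, R⁻¹(i) > R⁻¹(j)}`, i.e. item `j` is placed at
an earlier position than item `i`. -/
noncomputable def incorrectPairs (K : ℕ) (R : ℕ → ℕ) : Finset (ℕ × ℕ) :=
  (Finset.Icc 1 K ×ˢ Finset.Icc 1 K).filter
    (fun p => p.1 < p.2 ∧ ∃ k ∈ Finset.Icc 1 K, ∃ l ∈ Finset.Icc 1 K,
      k < l ∧ R k = p.2 ∧ R l = p.1)

/-- The set of unordered adjacent item pairs of a ranked list `R` over `[K]`: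
`AP(R) = { {R(k), R(k+1)} : k ∈ {1,…,K−1} }`. -/
def adjacentPairs (K : ℕ) (R : ℕ → ℕ) : Finset (Finset ℕ) :=
  (Finset.Icc 1 (K - 1)).image (fun k => ({R k, R (k + 1)} : Finset ℕ))

lemma step_V (K k : ℕ) (R R' : ℕ → ℕ)
    (hR'inj : Set.InjOn R' (Set.Icc 1 K))
    (hRmap : Set.MapsTo R (Set.Icc 1 K) (Set.Icc 1 K))
    (hk1 : 1 ≤ k) (hk2 : k + 1 ≤ K)
    (hlt : R (k + 1) < R k)
    (h1 : R' k = R (k + 1)) (h2 : R' (k + 1) = R k)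
    (h3 : ∀ p, p ≠ k → p ≠ k + 1 → R' p = R p) :
    (incorrectPairs K R').card < (incorrectPairs K R).card := by
  have hkmem : k ∈ Set.Icc 1 K := ⟨hk1, by omega⟩
  have hk1mem : (k + 1) ∈ Set.Icc 1 K := ⟨by omega, hk2⟩
  have hRR' : ∀ x, R' x = R (if x = k then k + 1 else if x = k + 1 then k else x) := by
    intro x
    split_ifs with hx hx'
    · rw [hx]; exact h1
    · rw [hx']; exact h2
    · exact h3 x hx hx'
  apply Finset.card_lt_card
  constructor
  · -- subset
    intro p hp
    simp only [incorrectPairs, Finset.mem_filter, Finset.mem_product, Finset.mem_Icc] at hp ⊢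
    obtain ⟨hmem, hps, k', hk', l', hl', hkl, hj, hi⟩ := hp
    refine ⟨hmem, hps, ?_⟩
    have hne : ¬ (k' = k ∧ l' = k + 1) := by
      rintro ⟨rfl, rfl⟩
      rw [h1] at hj; rw [h2] at hi
      omega
    refine ⟨if k' = k then k + 1 else if k' = k + 1 then k else k',
      by split_ifs <;> omega,
      if l' = k then k + 1 else if l' = k + 1 then k else l',
      by split_ifs <;> omega, by split_ifs <;> omega, ?_, ?_⟩
    · rw [← hRR' k']; exact hj
    · rw [← hRR' l']; exact hi
  · -- not superset: witness (R (k+1), R k)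
    intro hsup
    have hp0 : (R (k + 1), R k) ∈ incorrectPairs K R := by
      simp only [incorrectPairs, Finset.mem_filter, Finset.mem_product, Finset.mem_Icc]
      have h1' := hRmap hkmem
      have h2' := hRmap hk1mem
      simp only [Set.mem_Icc] at h1' h2'
      exact ⟨⟨⟨h2'.1, h2'.2⟩, ⟨h1'.1, h1'.2⟩⟩, hlt,
        k, by omega, k + 1, by omega, by omega, rfl, rfl⟩
    have := hsup hp0
    simp only [incorrectPairs, Finset.mem_filter, Finset.mem_product, Finset.mem_Icc] at this
    obtain ⟨-, -, k', hk', l', hl', hkl, hj, hi⟩ := this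
    have ek : k' = k + 1 := by
      apply hR'inj (Set.mem_Icc.mpr hk') hk1mem
      rw [hj, h2]
    have el : l' = k := by
      apply hR'inj (Set.mem_Icc.mpr hl') hkmem
      rw [hi, h1]
    omega

lemma step_AP (K k : ℕ) (R R' : ℕ → ℕ) (hk1 : 1 ≤ k)
    (h1 : R' k = R (k + 1)) (h2 : R' (k + 1) = R k)
    (h3 : ∀ p, p ≠ k → p ≠ k + 1 → R' p = R p) :
    adjacentPairs K R' ⊆ adjacentPairs K R ∪
      {({R' (k - 1), R' k} : Finset ℕ), ({R' (k + 1), R' (k + 2)} : Finset ℕ)} := by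
  intro S hS
  simp only [adjacentPairs, Finset.mem_image] at hS
  obtain ⟨j, hj, rfl⟩ := hS
  simp only [Finset.mem_union, Finset.mem_insert, Finset.mem_singleton]
  by_cases hjk : j = k - 1
  · right; left
    subst hjk
    have : k - 1 + 1 = k := by omega
    rw [this]
  by_cases hjk2 : j = k
  · left
    subst hjk2
    simp only [adjacentPairs, Finset.mem_image]
    refine ⟨j, hj, ?_⟩
    rw [h1, h2, Finset.pair_comm]
  by_cases hjk3 : j = k + 1
  · right; right
    subst hjk3
    rfl
  · left
    simp only [adjacentPairs, Finset.mem_image]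
    refine ⟨j, hj, ?_⟩
    rw [h3 j hjk2 hjk3, h3 (j + 1) (by omega) (by omega)]

/-- Lemma 6, swap bound. If each of the ranked lists
`R_1, …, R_m` is obtained from its predecessor by exchanging an
incorrectly-ordered adjacent item pair, then `m ≤ |V(R_0)|` and the total
number of distinct unordered adjacent item pairs appearing in
`R_0, …, R_m` is at most `K − 1 + 2|V(R_0)|`. -/
theorem bubblerank_swap_bound
    (K : ℕ) (hK : 2 ≤ K) (m : ℕ)
    (Rs : ℕ → ℕ → ℕ)
    (hranked : ∀ t ≤ m, Set.BijOn (Rs t) (Set.Icc 1 K) (Set.Icc 1 K))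
    (hstep : ∀ t, 1 ≤ t → t ≤ m → ∃ k, 1 ≤ k ∧ k + 1 ≤ K ∧
      Rs (t - 1) (k + 1) < Rs (t - 1) k ∧
      Rs t k = Rs (t - 1) (k + 1) ∧ Rs t (k + 1) = Rs (t - 1) k ∧
      ∀ p, p ≠ k → p ≠ k + 1 → Rs t p = Rs (t - 1) p) :
    m ≤ (incorrectPairs K (Rs 0)).card ∧
    ((Finset.range (m + 1)).biUnion (fun t => adjacentPairs K (Rs t))).card ≤
      K - 1 + 2 * (incorrectPairs K (Rs 0)).card := by
  have hVstep : ∀ n, n + 1 ≤ m →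
      (incorrectPairs K (Rs (n + 1))).card < (incorrectPairs K (Rs n)).card := by
    intro n hn
    obtain ⟨k, hk1, hk2, hlt, h1, h2, h3⟩ := hstep (n + 1) (by omega) hn
    simp only [Nat.add_sub_cancel] at hlt h1 h2 h3
    exact step_V K k (Rs n) (Rs (n + 1)) (hranked (n + 1) hn).injOn
      (hranked n (by omega)).mapsTo hk1 hk2 hlt h1 h2 h3
  have hV : ∀ n ≤ m, (incorrectPairs K (Rs n)).card + n ≤ (incorrectPairs K (Rs 0)).card := by
    intro n
    induction n with
    | zero => intro _; omega
    | succ n ih =>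
      intro hn
      have := ih (by omega)
      have := hVstep n hn
      omega
  have hm : m ≤ (incorrectPairs K (Rs 0)).card := by
    have := hV m le_rfl; omega
  refine ⟨hm, ?_⟩
  have hAP0 : (adjacentPairs K (Rs 0)).card ≤ K - 1 := by
    calc (adjacentPairs K (Rs 0)).card ≤ (Finset.Icc 1 (K - 1)).card :=
          Finset.card_image_le
      _ = K - 1 := by rw [Nat.card_Icc]; omega
  have hAP : ∀ n ≤ m,
      ((Finset.range (n + 1)).biUnion (fun t => adjacentPairs K (Rs t))).card
        ≤ K - 1 + 2 * n := by
    intro n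
    induction n with
    | zero =>
      intro _
      simpa using hAP0
    | succ n ih =>
      intro hn
      have ihn := ih (by omega)
      obtain ⟨k, hk1, hk2, hlt, h1, h2, h3⟩ := hstep (n + 1) (by omega) hn
      simp only [Nat.add_sub_cancel] at hlt h1 h2 h3
      have hsub := step_AP K k (Rs n) (Rs (n + 1)) hk1 h1 h2 h3
      have hunion : (Finset.range (n + 1 + 1)).biUnion (fun t => adjacentPairs K (Rs t))
          ⊆ (Finset.range (n + 1)).biUnion (fun t => adjacentPairs K (Rs t)) ∪
            {({Rs (n+1) (k - 1), Rs (n+1) k} : Finset ℕ),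
             ({Rs (n+1) (k + 1), Rs (n+1) (k + 2)} : Finset ℕ)} := by
        intro S hS
        simp only [Finset.mem_biUnion, Finset.mem_range] at hS
        obtain ⟨t, ht, hSt⟩ := hS
        rcases Nat.lt_or_ge t (n + 1) with ht' | ht'
        · exact Finset.mem_union_left _ (Finset.mem_biUnion.mpr ⟨t, Finset.mem_range.mpr ht', hSt⟩)
        · have : t = n + 1 := by omega
          subst this
          rcases Finset.mem_union.mp (hsub hSt) with h | h
          · exact Finset.mem_union_left _
              (Finset.mem_biUnion.mpr ⟨n, Finset.mem_range.mpr (by omega), h⟩)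
          · exact Finset.mem_union_right _ h
      calc ((Finset.range (n + 1 + 1)).biUnion (fun t => adjacentPairs K (Rs t))).card
          ≤ ((Finset.range (n + 1)).biUnion (fun t => adjacentPairs K (Rs t)) ∪
              {({Rs (n+1) (k - 1), Rs (n+1) k} : Finset ℕ),
               ({Rs (n+1) (k + 1), Rs (n+1) (k + 2)} : Finset ℕ)}).card :=
            Finset.card_le_card hunion
        _ ≤ ((Finset.range (n + 1)).biUnion (fun t => adjacentPairs K (Rs t))).card +
              ({({Rs (n+1) (k - 1), Rs (n+1) k} : Finset ℕ),
               ({Rs (n+1) (k + 1), Rs (n+1) (k + 2)} : Finset ℕ)} : Finset (Finset ℕ)).card :=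
            Finset.card_union_le _ _
        _ ≤ (K - 1 + 2 * n) + 2 := by
            have : ({({Rs (n+1) (k - 1), Rs (n+1) k} : Finset ℕ),
               ({Rs (n+1) (k + 1), Rs (n+1) (k + 2)} : Finset ℕ)} : Finset (Finset ℕ)).card ≤ 2 :=
              Finset.card_insert_le _ _ |>.trans (by simp)
            omega
        _ = K - 1 + 2 * (n + 1) := by ring
  have := hAP m le_rfl
  omega
end

section
/- Let K ≥ 2 and let R_0, R_1, …, R_m be ranked lists over [K] such that for each t ∈ {1,…,m}, R_t is obtained from R_{t−1} by exchanging the items at some pair of adjacent positions (k, k+1) with R_{t−1}(k+1) < R_{t−1}(k) (each exchange corrects an incorrectly-ordered adjacent item pair). Let D be obtained from R_m by a set of pairwise disjoint adjacent transpositions. Then |V(D)| ≤ |V(R_0)| + ⌊K/2⌋, where V denotes the set of incorrectly-ordered item pairs. -/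
open scoped Classical

lemma card_le_of_adjSwaps (K : ℕ) (R D : ℕ → ℕ) (S : Finset ℕ)
    (hswap : AdjSwaps K R D S) :
    (incorrectPairs K D).card ≤ (incorrectPairs K R).card +
      (S.filter (fun k => R k < R (k + 1))).card := by
  obtain ⟨hSsub, hScons, hSswap, hSfix⟩ := hswap
  set σ : ℕ → ℕ := fun p => if p ∈ S then p + 1 else if p - 1 ∈ S then p - 1 else p with hσ
  have hmemS : ∀ p ∈ S, 1 ≤ p ∧ p ≤ K - 1 := by
    intro p hp; have := hSsub hp; simpa using this
  have hDσ : ∀ p, 1 ≤ p → p ≤ K → D p = R (σ p) := by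
    intro p hp1 hpK
    by_cases h1 : p ∈ S
    · simp only [hσ, if_pos h1]; exact (hSswap p h1).1
    · by_cases h2 : p - 1 ∈ S
      · simp only [hσ, if_neg h1, if_pos h2]
        have h3 : 1 ≤ p - 1 := (hmemS _ h2).1
        have : p = (p - 1) + 1 := by omega
        rw [this]; exact (hSswap _ h2).2
      · simp only [hσ, if_neg h1, if_neg h2]
        exact hSfix p ⟨hp1, hpK⟩ h1 h2
  have hσub : ∀ p, σ p ≤ p + 1 := by
    intro p; simp only [hσ]; split <;> [omega; (split <;> omega)]
  have hσlb : ∀ p, p - 1 ≤ σ p := by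
    intro p; simp only [hσ]; split <;> [omega; (split <;> omega)]
  have hσmem : ∀ p, 1 ≤ p → p ≤ K → 1 ≤ σ p ∧ σ p ≤ K := by
    intro p hp1 hpK; simp only [hσ]
    by_cases h1 : p ∈ S
    · have := hmemS p h1; simp [h1]; omega
    · by_cases h2 : p - 1 ∈ S
      · have := hmemS _ h2; simp [h1, h2]; omega
      · simp [h1, h2]; omega
  have hsub : incorrectPairs K D ⊆ incorrectPairs K R ∪
      (S.filter (fun k => R k < R (k + 1))).image (fun k => (R k, R (k + 1))) := by
    intro p hp
    simp only [incorrectPairs, Finset.mem_filter, Finset.mem_product, Finset.mem_Icc] at hp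
    obtain ⟨⟨⟨hi1, hiK⟩, hj1, hjK⟩, hij, q, ⟨hq1, hqK⟩, l, ⟨hl1, hlK⟩, hql, hDq, hDl⟩ := hp
    have hRq : R (σ q) = p.2 := by rw [← hDσ q hq1 hqK]; exact hDq
    have hRl : R (σ l) = p.1 := by rw [← hDσ l hl1 hlK]; exact hDl
    rcases lt_or_ge (σ q) (σ l) with hlt | hle
    · apply Finset.mem_union_left
      simp only [incorrectPairs, Finset.mem_filter, Finset.mem_product, Finset.mem_Icc]
      refine ⟨⟨⟨hi1, hiK⟩, hj1, hjK⟩, hij, σ q, ?_, σ l, ?_, hlt, hRq, hRl⟩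
      · exact (hσmem q hq1 hqK).imp id id
      · exact (hσmem l hl1 hlK).imp id id
    · have hne : σ q ≠ σ l := by
        intro h; rw [h, hRl] at hRq; omega
      have hlt' : σ l < σ q := lt_of_le_of_ne hle (Ne.symm hne)
      have hub := hσub q; have hlb := hσlb l
      have hlq : l = q + 1 := by omega
      have hqS : q ∈ S := by
        by_contra hqS
        have h1 : σ q ≤ q := by simp only [hσ, if_neg hqS]; split <;> omega
        have h2 : q + 1 ≤ σ l := by
          subst hlq
          by_cases h3 : q + 1 ∈ S
          · simp only [hσ, if_pos h3]; omega
          · simp only [hσ, if_neg h3]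
            have : q + 1 - 1 = q := by omega
            rw [this, if_neg hqS]
        omega
      have hσq : σ q = q + 1 := by simp only [hσ, if_pos hqS]
      have hσl : σ l = q := by
        subst hlq
        have h3 : q + 1 ∉ S := hScons q hqS
        simp only [hσ, if_neg h3]
        have : q + 1 - 1 = q := by omega
        rw [this, if_pos hqS]
      apply Finset.mem_union_right
      simp only [Finset.mem_image, Finset.mem_filter]
      have hRq' : R (q + 1) = p.2 := by rw [← hσq]; exact hRq
      have hRl' : R q = p.1 := by rw [← hσl]; exact hRl
      refine ⟨q, ⟨hqS, ?_⟩, ?_⟩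
      · rw [hRq', hRl']; exact hij
      · rw [hRq', hRl']
  calc (incorrectPairs K D).card ≤ _ := Finset.card_le_card hsub
    _ ≤ _ + ((S.filter (fun k => R k < R (k + 1))).image (fun k => (R k, R (k + 1)))).card :=
        Finset.card_union_le _ _
    _ ≤ _ := by gcongr; exact Finset.card_image_le

/-- Lemma 1, safety of BubbleRank. If each base list
`R_1, …, R_m` is obtained from its predecessor by exchanging an
incorrectly-ordered adjacent item pair, and a displayed list `D` is obtained
from `R_m` by pairwise disjoint adjacent transpositions, then
`|V(D)| ≤ |V(R_0)| + ⌊K/2⌋`. -/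
theorem bubblerank_safety
    (K : ℕ) (hK : 2 ≤ K) (m : ℕ)
    (Rs : ℕ → ℕ → ℕ)
    (hranked : ∀ t ≤ m, Set.BijOn (Rs t) (Set.Icc 1 K) (Set.Icc 1 K))
    (hstep : ∀ t, 1 ≤ t → t ≤ m → ∃ k, 1 ≤ k ∧ k + 1 ≤ K ∧
      Rs (t - 1) (k + 1) < Rs (t - 1) k ∧
      Rs t k = Rs (t - 1) (k + 1) ∧ Rs t (k + 1) = Rs (t - 1) k ∧
      ∀ p, p ≠ k → p ≠ k + 1 → Rs t p = Rs (t - 1) p)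
    (D : ℕ → ℕ) (S : Finset ℕ)
    (hswap : AdjSwaps K (Rs m) D S) :
    (incorrectPairs K D).card ≤ (incorrectPairs K (Rs 0)).card + K / 2 := by
  -- Step 1: card V(R_t) ≤ card V(R_0)
  have hmono : ∀ t, t ≤ m → (incorrectPairs K (Rs t)).card ≤ (incorrectPairs K (Rs 0)).card := by
    intro t
    induction t with
    | zero => intro _; exact le_refl _
    | succ t ih =>
      intro htm
      obtain ⟨k, hk1, hkK, hdec, hs1, hs2, hfix⟩ := hstep (t + 1) (by omega) htm
      simp only [Nat.add_sub_cancel] at hdec hs1 hs2 hfix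
      have hAdj : AdjSwaps K (Rs t) (Rs (t + 1)) {k} := by
        refine ⟨?_, ?_, ?_, ?_⟩
        · intro x hx; simp at hx; subst hx; simp; omega
        · intro x hx; simp at hx; subst hx; simp
        · intro x hx; simp at hx; subst hx; exact ⟨hs1, hs2⟩
        · intro p hp h1 h2
          simp at h1 h2
          exact hfix p h1 (by omega)
      have := card_le_of_adjSwaps K (Rs t) (Rs (t + 1)) {k} hAdj
      have hfilt : ({k} : Finset ℕ).filter (fun j => Rs t j < Rs t (j + 1)) = ∅ := by
        ext x; simp only [Finset.mem_filter, Finset.mem_singleton, Finset.notMem_empty,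
          iff_false, not_and]
        intro hx; subst hx; omega
      rw [hfilt] at this
      simp at this
      exact le_trans this (ih (by omega))
  -- Step 2: final swaps
  have h1 := card_le_of_adjSwaps K (Rs m) D S hswap
  obtain ⟨hSsub, hScons, _, _⟩ := hswap
  have hScard : S.card ≤ K / 2 := by
    have : S.card ≤ (Finset.Icc 1 (K / 2)).card := by
      apply Finset.card_le_card_of_injOn (fun k => (k + 1) / 2)
      · intro k hk
        have := hSsub hk
        simp only [Finset.mem_Icc, Finset.mem_coe] at this ⊢
        omega
      · intro a ha b hb hab
        simp only [Finset.mem_coe] at ha hb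
        have h1 : a + 1 ≠ b := fun h => hScons a ha (h ▸ hb)
        have h2 : b + 1 ≠ a := fun h => hScons b hb (h ▸ ha)
        have hab' : (a + 1) / 2 = (b + 1) / 2 := hab
        omega
    simpa using this
  calc (incorrectPairs K D).card
      ≤ (incorrectPairs K (Rs m)).card + (S.filter (fun k => Rs m k < Rs m (k + 1))).card := h1
    _ ≤ (incorrectPairs K (Rs 0)).card + S.card :=
        Nat.add_le_add (hmono m le_rfl) (Finset.card_le_card (Finset.filter_subset _ _))
    _ ≤ _ := Nat.add_le_add_left hScard _
end

section
/- Let δ ∈ (0, 1/e], L = log(1/δ), and let a, b be reals with a > b ≥ 0 and a + b > 0; set c = (a − b)/(a + b). Let T ∈ ℕ and let (s_t)_{t=0}^{T} be real numbers and (n_t)_{t=0}^{T} be nonnegative reals with s_0 = 0, n_0 = 0, satisfying for every t ∈ {1,…,T}: (i) c·n_t − 2·√(n_t·L) ≤ s_t; and (ii) if s_{t−1} ≤ 2·√(n_{t−1}·L), then n_{t−1} ≤ n_t ≤ n_{t−1} + 1 and |s_t − s_{t−1}| ≤ n_t − n_{t−1}, while otherwise s_t = s_{t−1} and n_t = n_{t−1}.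 Then s_T ≤ 15·((a + b)/(a − b))·L. -/
/-- deterministic core of Lemma 7, cumulative click loss.
Let `δ ∈ (0, 1/e]`, `L = log(1/δ)`, `a > b ≥ 0` with `a + b > 0`, and
`c = (a − b)/(a + b)`. Suppose the sequences `(s_t)` and `(n_t)` start at
`s_0 = n_0 = 0`, that `c·n_t − 2√(n_t·L) ≤ s_t` for all `t ∈ {1,…,T}`, and
that at each step, if `s_{t−1} ≤ 2√(n_{t−1}·L)` then `n` increases by at most
one and `|s_t − s_{t−1}| ≤ n_t − n_{t−1}`, and otherwise both sequences stay
constant. Then `s_T ≤ 15 ((a + b)/(a − b)) log(1/δ)`. -/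
theorem bubblerank_cumulative_click_loss
    (δ L a b c : ℝ) (T : ℕ) (s n : ℕ → ℝ)
    (hδ0 : 0 < δ) (hδe : δ ≤ (Real.exp 1)⁻¹)
    (hL : L = Real.log (1 / δ))
    (hba : b < a) (hb0 : 0 ≤ b) (hab : 0 < a + b)
    (hc : c = (a - b) / (a + b))
    (hs0 : s 0 = 0) (hn0 : n 0 = 0)
    (hnneg : ∀ t ≤ T, 0 ≤ n t)
    (hlower : ∀ t, 1 ≤ t → t ≤ T →
      c * n t - 2 * Real.sqrt (n t * L) ≤ s t)
    (hstep : ∀ t, 1 ≤ t → t ≤ T →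
      (s (t - 1) ≤ 2 * Real.sqrt (n (t - 1) * L) →
        n (t - 1) ≤ n t ∧ n t ≤ n (t - 1) + 1 ∧
          |s t - s (t - 1)| ≤ n t - n (t - 1)) ∧
      (¬ s (t - 1) ≤ 2 * Real.sqrt (n (t - 1) * L) →
        s t = s (t - 1) ∧ n t = n (t - 1))) :
    s T ≤ 15 * ((a + b) / (a - b)) * L := by
  have hL1 : 1 ≤ L := by
    rw [hL, Real.le_log_iff_exp_le (by positivity)]
    rw [le_div_iff₀ hδ0, ← le_div_iff₀' (Real.exp_pos 1)]
    simpa [one_div] using hδe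
  have hL0 : 0 < L := by linarith
  have hc0 : 0 < c := by rw [hc]; exact div_pos (by linarith) hab
  have hc1 : c ≤ 1 := by rw [hc, div_le_one hab]; linarith
  have hgoal : 15 * ((a + b) / (a - b)) * L = 15 / c * L := by
    rw [hc]; field_simp
  rw [hgoal]
  have key : ∀ t, t ≤ T → s t ≤ 15 / c * L := by
    intro t
    induction t with
    | zero => intro _; rw [hs0]; positivity
    | succ k ih =>
      intro hkT
      have hk1 : 1 ≤ k + 1 := Nat.le_add_left 1 k
      have hstep' := hstep (k + 1) hk1 hkT
      simp only [Nat.add_sub_cancel] at hstep'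
      by_cases hcase : s k ≤ 2 * Real.sqrt (n k * L)
      · obtain ⟨h1, h2, h3⟩ := hstep'.1 hcase
        have habs := abs_le.mp h3
        have hmono : Real.sqrt (n k * L) ≤ Real.sqrt (n (k + 1) * L) :=
          Real.sqrt_le_sqrt (mul_le_mul_of_nonneg_right h1 (le_of_lt hL0))
        have hsk1 : s (k + 1) ≤ 2 * Real.sqrt (n (k + 1) * L) + 1 := by
          linarith [habs.2]
        have hlow := hlower (k + 1) hk1 hkT
        set y := Real.sqrt (n (k + 1) * L) with hy
        have hy0 : 0 ≤ y := Real.sqrt_nonneg _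
        have hn1 : 0 ≤ n (k + 1) := hnneg (k + 1) hkT
        have hysq : y ^ 2 = n (k + 1) * L := Real.sq_sqrt (by positivity)
        have hcn : c * n (k + 1) ≤ 4 * y + 1 := by linarith
        have hkey : c * y ^ 2 ≤ (4 * y + 1) * L := by
          calc c * y ^ 2 = (c * n (k + 1)) * L := by rw [hysq]; ring
          _ ≤ (4 * y + 1) * L := mul_le_mul_of_nonneg_right hcn (le_of_lt hL0)
        have hfin : c * (2 * y + 1) ≤ 15 * L := by
          nlinarith [hkey, mul_nonneg (sub_nonneg.mpr (hc1.trans hL1)) hy0,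
            mul_pos hL0 hL0, mul_nonneg (le_of_lt hL0) hy0, sq_nonneg (y - 1),
            mul_nonneg (mul_nonneg (le_of_lt hc0) hy0) hy0]
        have : 2 * y + 1 ≤ 15 / c * L := by
          rw [div_mul_eq_mul_div, le_div_iff₀ hc0]; linarith [hfin]
        linarith
      · obtain ⟨he, _⟩ := hstep'.2 hcase
        rw [he]; exact ih (le_trans (Nat.le_succ k) hkT)
  exact key T le_rfl
end

section
/- Let L ≥ K ≥ 1 and let α : {1,…,L} → [0,1]. For any injective map R : {1,…,K} → {1,…,L}, the expected number of clicks in the cascade model satisfies Σ_{k=1}^{K} [ Π_{i=1}^{k−1} (1 − α(R(i))) ] · α(R(k)) = 1 − Π_{k=1}^{K} (1 − α(R(k))). Consequently, if α is nonincreasing, then this quantity is maximized over all injective maps R : {1,…,K} → {1,…,L} by the optimal list R*(k) = k, i.e., for every injective R, Σ_{k=1}^{K} [ Π_{i=1}^{k−1} (1 − α(R(i))) ] · α(R(k)) ≤ 1 − Π_{k=1}^{K} (1 − α(k)). -/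
lemma cascade_telescope (a : ℕ → ℝ) (n : ℕ) :
    ∑ k ∈ Finset.Icc 1 n, (∏ i ∈ Finset.Icc 1 (k - 1), (1 - a i)) * a k =
      1 - ∏ k ∈ Finset.Icc 1 n, (1 - a k) := by
  induction n with
  | zero => simp
  | succ n ih =>
    rw [Finset.sum_Icc_succ_top (by omega), Finset.prod_Icc_succ_top (by omega), ih]
    simp only [Nat.add_sub_cancel]
    ring

lemma fin_strictMono_ge {K : ℕ} (f : Fin K → ℕ) (hf : StrictMono f)
    (h1 : ∀ i, 1 ≤ f i) : ∀ i : Fin K, i.val + 1 ≤ f i := by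
  have : ∀ n, ∀ h : n < K, n + 1 ≤ f ⟨n, h⟩ := by
    intro n
    induction n with
    | zero => intro h; exact h1 _
    | succ n ihn =>
      intro h
      have h' : n < K := by omega
      have hlt : f ⟨n, h'⟩ < f ⟨n + 1, h⟩ := hf (by simp [Fin.lt_def])
      have := ihn h'
      omega
  intro i; simpa using this i.val i.isLt

/-- optimality of the sorted list in the cascade model.
In the cascade model with attraction probabilities `α : [L] → [0,1]`, for any
injective ranked list `R : [K] → [L]` the expected number of clicks equals
`1 − Π_{k=1}^K (1 − α(R(k)))`; consequently, if `α` is nonincreasing, it is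
maximized by the identity list `R*(k) = k`. -/
theorem cascade_model_optimal_list
    (L K : ℕ) (hK : 1 ≤ K) (hKL : K ≤ L)
    (α : ℕ → ℝ) (hα01 : ∀ i ∈ Set.Icc 1 L, α i ∈ Set.Icc (0 : ℝ) 1) :
    (∀ R : ℕ → ℕ, Set.MapsTo R (Set.Icc 1 K) (Set.Icc 1 L) →
      Set.InjOn R (Set.Icc 1 K) →
      ∑ k ∈ Finset.Icc 1 K,
          (∏ i ∈ Finset.Icc 1 (k - 1), (1 - α (R i))) * α (R k) =
        1 - ∏ k ∈ Finset.Icc 1 K, (1 - α (R k))) ∧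
    (AntitoneOn α (Set.Icc 1 L) →
      ∀ R : ℕ → ℕ, Set.MapsTo R (Set.Icc 1 K) (Set.Icc 1 L) →
        Set.InjOn R (Set.Icc 1 K) →
        ∑ k ∈ Finset.Icc 1 K,
            (∏ i ∈ Finset.Icc 1 (k - 1), (1 - α (R i))) * α (R k) ≤
          1 - ∏ k ∈ Finset.Icc 1 K, (1 - α k)) := by
  constructor
  · intro R _ _
    exact cascade_telescope (fun i => α (R i)) K
  · intro hanti R hmaps hinj
    rw [cascade_telescope (fun i => α (R i)) K]
    have hsub : ∀ k ∈ Finset.Icc 1 K, R k ∈ Finset.Icc 1 L := by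
      intro k hk
      simp only [Finset.mem_Icc] at hk ⊢
      have := hmaps (Set.mem_Icc.mpr hk)
      exact Set.mem_Icc.mp this
    -- the image set
    set S : Finset ℕ := (Finset.Icc 1 K).image R with hS
    have hinj' : Set.InjOn R ↑(Finset.Icc 1 K) := by
      simpa [Finset.coe_Icc] using hinj
    have hcard : S.card = K := by
      rw [hS, Finset.card_image_of_injOn hinj', Nat.card_Icc]; omega
    have hprod_img : ∏ k ∈ Finset.Icc 1 K, (1 - α (R k)) = ∏ j ∈ S, (1 - α j) := by
      rw [hS, Finset.prod_image (fun a ha b hb hab => hinj' ha hb hab)]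
    have hSsub : ∀ j ∈ S, j ∈ Finset.Icc 1 L := by
      intro j hj
      rw [hS, Finset.mem_image] at hj
      obtain ⟨k, hk, rfl⟩ := hj
      exact hsub k hk
    set f := S.orderEmbOfFin hcard with hf
    have hf1 : ∀ i, 1 ≤ f i := by
      intro i
      have := hSsub _ (S.orderEmbOfFin_mem hcard i)
      simp only [Finset.mem_Icc] at this
      exact this.1
    have hge : ∀ i : Fin K, i.val + 1 ≤ f i :=
      fin_strictMono_ge f (OrderEmbedding.strictMono f) hf1
    have hprodS : ∏ j ∈ S, (1 - α j) = ∏ i : Fin K, (1 - α (f i)) :=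
      (Finset.prod_bij (fun (i : Fin K) _ => f i)
        (fun i _ => S.orderEmbOfFin_mem hcard i)
        (fun a _ b _ h => f.injective h)
        (fun b hb => by
          have hb' : b ∈ Set.range f := by
            rw [hf, Finset.range_orderEmbOfFin]; exact hb
          obtain ⟨i, hi⟩ := hb'
          exact ⟨i, Finset.mem_univ _, hi⟩)
        (fun i _ => rfl)).symm
    -- identity list product over Fin K
    have hprodId : ∏ k ∈ Finset.Icc 1 K, (1 - α k) = ∏ i : Fin K, (1 - α (i.val + 1)) := by
      rw [Finset.prod_bij (fun (i : Fin K) _ => i.val + 1)]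
      · intro i _; simp only [Finset.mem_Icc]; omega
      · intro a _ b _ h
        exact Fin.ext (by omega)
      · intro b hb
        simp only [Finset.mem_Icc] at hb
        exact ⟨⟨b - 1, by omega⟩, Finset.mem_univ _, by simp; omega⟩
      · intro i _; rfl
    -- termwise comparison
    have hle : ∏ i : Fin K, (1 - α (i.val + 1)) ≤ ∏ i : Fin K, (1 - α (f i)) := by
      apply Finset.prod_le_prod
      · intro i _
        have hmem : (i.val + 1 : ℕ) ∈ Set.Icc 1 L := by
          constructor
          · omega
          · have := i.isLt; omega
        have := hα01 _ hmem
        simp only [Set.mem_Icc] at this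
        linarith [this.2]
      · intro i _
        have hfS : f i ∈ Finset.Icc 1 L := hSsub _ (S.orderEmbOfFin_mem hcard i)
        simp only [Finset.mem_Icc] at hfS
        have h1 : (i.val + 1 : ℕ) ∈ Set.Icc 1 L := by
          constructor
          · omega
          · have := i.isLt; omega
        have h2 : f i ∈ Set.Icc 1 L := Set.mem_Icc.mpr hfS
        have := hanti h1 h2 (hge i)
        linarith
    rw [hprod_img, hprodS]
    have : ∏ k ∈ Finset.Icc 1 K, (1 - α k) ≤ ∏ i : Fin K, (1 - α (f i)) := by
      rw [hprodId]; exact hle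
    linarith
end

section
/- Let K ≥ 1, let α : {1,…,K} → [0,1] be nonincreasing, and let R be a bijection of {1,…,K}. Then for every k ∈ {1,…,K}, Π_{i=1}^{k−1} (1 − α(R(i))) ≥ Π_{i=1}^{k−1} (1 − α(i)); that is, in the cascade model every position is examined the least in the optimal list R*(k) = k. -/
lemma prod_one_sub_le_of_subset (K n : ℕ) (hn : n ≤ K)
    (α : ℕ → ℝ) (hα01 : ∀ i ∈ Set.Icc 1 K, α i ∈ Set.Icc (0 : ℝ) 1)
    (hαanti : AntitoneOn α (Set.Icc 1 K))
    (S : Finset ℕ) (hS : S ⊆ Finset.Icc 1 K) (hcard : S.card = n) :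
    ∏ i ∈ Finset.Icc 1 n, (1 - α i) ≤ ∏ j ∈ S, (1 - α j) := by
  set g := S.orderEmbOfFin hcard with hg
  have hgmem : ∀ i : Fin n, g i ∈ Finset.Icc 1 K := fun i =>
    hS (S.orderEmbOfFin_mem hcard i)
  have hge : ∀ i : Fin n, (i : ℕ) + 1 ≤ g i := by
    have key : ∀ m : ℕ, ∀ hm : m < n, m + 1 ≤ g ⟨m, hm⟩ := by
      intro m
      induction m with
      | zero =>
        intro hm
        have := Finset.mem_Icc.mp (hgmem ⟨0, hm⟩)
        simpa using this.1
      | succ j ih =>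
        intro hm
        have hj : j < n := Nat.lt_of_succ_lt hm
        have h1 : g ⟨j, hj⟩ < g ⟨j + 1, hm⟩ :=
          (S.orderEmbOfFin hcard).strictMono (by simp [Fin.lt_def])
        have := ih hj
        omega
    intro i; exact key i.1 i.2
  -- rewrite the RHS as a product over Fin n
  have hRHS : ∏ j ∈ S, (1 - α j) = ∏ i : Fin n, (1 - α (g i)) := by
    refine (Finset.prod_bij (fun i _ => g i) ?_ ?_ ?_ ?_).symm
    · intro i _; exact S.orderEmbOfFin_mem hcard i
    · intro a _ b _ h; exact (S.orderEmbOfFin hcard).injective h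
    · intro b hb
      have : b ∈ Set.range g := by rw [hg, Finset.range_orderEmbOfFin]; exact hb
      obtain ⟨i, hi⟩ := this
      exact ⟨i, Finset.mem_univ i, hi⟩
    · intro i _; rfl
  have hLHS : ∏ i ∈ Finset.Icc 1 n, (1 - α i) = ∏ i : Fin n, (1 - α ((i : ℕ) + 1)) := by
    rw [Fin.prod_univ_eq_prod_range (fun i => (1 - α (i + 1)))]
    rw [show Finset.Icc 1 n = Finset.Ico 1 (n + 1) by rfl,
      Finset.prod_Ico_eq_prod_range]
    simp [add_comm]
  rw [hRHS, hLHS]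
  refine Finset.prod_le_prod ?_ ?_
  · intro i _
    have := hα01 ((i : ℕ) + 1) (by
      have : (i : ℕ) + 1 ≤ K := le_trans (by omega) hn
      simp [Set.mem_Icc]; omega)
    simp [Set.mem_Icc] at this
    linarith [this.2]
  · intro i _
    have hgi := Finset.mem_Icc.mp (hgmem i)
    have h1 : ((i : ℕ) + 1) ∈ Set.Icc 1 K := by
      constructor <;> [omega; exact le_trans (by omega) hn]
    have h2 : g i ∈ Set.Icc 1 K := by simp [Set.mem_Icc]; omega
    have := hαanti h1 h2 (hge i)
    linarith

/-- Assumption A5 in the cascade model. For nonincreasing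
attraction probabilities `α : [K] → [0,1]` and any bijection `R` of `{1,…,K}`,
the cascade-model examination probability of every position `k` in `R`,
`Π_{i=1}^{k−1} (1 − α(R(i)))`, is at least that in the optimal list
`R*(k) = k`, namely `Π_{i=1}^{k−1} (1 − α(i))`. -/
theorem cascade_model_optimal_list_least_examined
    (K : ℕ) (hK : 1 ≤ K)
    (α : ℕ → ℝ) (hα01 : ∀ i ∈ Set.Icc 1 K, α i ∈ Set.Icc (0 : ℝ) 1)
    (hαanti : AntitoneOn α (Set.Icc 1 K))
    (R : ℕ → ℕ) (hR : Set.BijOn R (Set.Icc 1 K) (Set.Icc 1 K)) :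
    ∀ k ∈ Set.Icc 1 K,
      ∏ i ∈ Finset.Icc 1 (k - 1), (1 - α i) ≤
        ∏ i ∈ Finset.Icc 1 (k - 1), (1 - α (R i)) := by
  intro k hk
  obtain ⟨hk1, hkK⟩ := hk
  have hsub : ∀ i ∈ Finset.Icc 1 (k - 1), i ∈ Set.Icc 1 K := by
    intro i hi
    have := Finset.mem_Icc.mp hi
    constructor <;> omega
  have hinj : Set.InjOn R (Finset.Icc 1 (k - 1) : Finset ℕ) := by
    intro a ha b hb hab
    exact hR.injOn (hsub a ha) (hsub b hb) hab
  set S : Finset ℕ := (Finset.Icc 1 (k - 1)).image R with hSdef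
  have hprod : ∏ j ∈ S, (1 - α j) = ∏ i ∈ Finset.Icc 1 (k - 1), (1 - α (R i)) :=
    Finset.prod_image fun a ha b hb hab => hinj ha hb hab
  have hScard : S.card = k - 1 := by
    rw [hSdef, Finset.card_image_of_injOn hinj, Nat.card_Icc]; omega
  have hSsub : S ⊆ Finset.Icc 1 K := by
    intro j hj
    obtain ⟨i, hi, rfl⟩ := Finset.mem_image.mp hj
    have := hR.mapsTo (hsub i hi)
    simp [Set.mem_Icc] at this
    exact Finset.mem_Icc.mpr this
  rw [← hprod]
  exact prod_one_sub_le_of_subset K (k - 1) (by omega) α hα01 hαanti S hSsub hScard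
end
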